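/- arXiv:1412.3975 — 2 statements merged into one kernel-verified Lean document; each statement's English description precedes it below -/
import Mathlib

section
/- Let n : U → ℝ^d be a C¹ unit normal field (|n(x)| = 1 for all x) on an open set U ⊆ ℝ^d, and let P(x) = E - n(x) n(x)ᵀ. Define κ := Tr(P ∇n) (the mean curvature). Then for each i, ((P∇)ᵀ P)_i := Σ_{k,j} P_{jk} ∇_j P_{ik} = -κ n_i; that is, (P∇)ᵀP = -κ n. -/
open Matrix

/-- Curvature lemma: for a `C¹` unit normal field `n` on an open set `U ⊆ ℝ^d` with
tangential projection `P(x) = E - n(x)n(x)ᵀ` and mean curvature `κ := Tr(P ∇n)`,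
one has `((P∇)ᵀP)_i = Σ_{k,j} P_{jk} ∇_j P_{ik} = -κ n_i`. -/
theorem curvature_lemma {d : ℕ} (U : Set (Fin d → ℝ)) (hU : IsOpen U)
    (n : (Fin d → ℝ) → (Fin d → ℝ))
    (hdiff : ∀ i, DifferentiableOn ℝ (fun y => n y i) U)
    (hunit : ∀ y ∈ U, ∑ i, n y i * n y i = 1)
    (P : (Fin d → ℝ) → Matrix (Fin d) (Fin d) ℝ)
    (hP : ∀ y, P y = 1 - Matrix.vecMulVec (n y) (n y))
    (κ : (Fin d → ℝ) → ℝ)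
    (hκ : ∀ y, κ y = ∑ i, ∑ j, P y i j * fderiv ℝ (fun z => n z j) y (Pi.single i 1))
    (x : Fin d → ℝ) (hx : x ∈ U) (i : Fin d) :
    ∑ k, ∑ j, P x j k * fderiv ℝ (fun y => P y i k) x (Pi.single j 1)
      = -(κ x * n x i) := by
  have hmem : U ∈ nhds x := hU.mem_nhds hx
  have hd : ∀ k, DifferentiableAt ℝ (fun y => n y k) x :=
    fun k => (hdiff k).differentiableAt hmem
  -- derivative of the entries of P
  have hder : ∀ k j, fderiv ℝ (fun y => P y i k) x (Pi.single j 1)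
      = -(n x i * fderiv ℝ (fun z => n z k) x (Pi.single j 1)
          + n x k * fderiv ℝ (fun z => n z i) x (Pi.single j 1)) := by
    intro k j
    have hfun : (fun y => P y i k) =
        fun y => (if i = k then (1:ℝ) else 0) - n y i * n y k := by
      funext y; rw [hP]
      simp [Matrix.sub_apply, Matrix.one_apply, Matrix.vecMulVec_apply]
    have hmul : HasFDerivAt (fun y => n y i * n y k)
        (n x i • fderiv ℝ (fun z => n z k) x + n x k • fderiv ℝ (fun z => n z i) x) x :=
      (hd i).hasFDerivAt.mul (hd k).hasFDerivAt
    have h : HasFDerivAt (fun y => P y i k)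
        (-(n x i • fderiv ℝ (fun z => n z k) x + n x k • fderiv ℝ (fun z => n z i) x)) x := by
      rw [hfun]
      have h2 : HasFDerivAt (fun y => (if i = k then (1:ℝ) else 0) - n y i * n y k)
          (0 - (n x i • fderiv ℝ (fun z => n z k) x + n x k • fderiv ℝ (fun z => n z i) x)) x :=
        (hasFDerivAt_const (if i = k then (1:ℝ) else 0) x).sub hmul
      simpa using h2
    rw [h.fderiv]
    simp
  -- P x annihilates n x
  have hPn : ∀ j, ∑ k, P x j k * n x k = 0 := by
    intro j
    have h1 := hunit x hx
    simp only [hP, Matrix.sub_apply, Matrix.one_apply, Matrix.vecMulVec_apply]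
    calc ∑ k, ((if j = k then (1:ℝ) else 0) - n x j * n x k) * n x k
        = (∑ k, (if j = k then (1:ℝ) else 0) * n x k)
            - n x j * ∑ k, n x k * n x k := by
          rw [Finset.mul_sum, ← Finset.sum_sub_distrib]
          exact Finset.sum_congr rfl fun k _ => by ring
      _ = n x j - n x j * 1 := by rw [h1]; simp
      _ = 0 := by ring
  calc ∑ k, ∑ j, P x j k * fderiv ℝ (fun y => P y i k) x (Pi.single j 1)
      = ∑ j, ∑ k, (-(n x i) * (P x j k * fderiv ℝ (fun z => n z k) x (Pi.single j 1))
          + (-(fderiv ℝ (fun z => n z i) x (Pi.single j 1))) * (P x j k * n x k)) := by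
        rw [Finset.sum_comm]
        exact Finset.sum_congr rfl fun j _ => Finset.sum_congr rfl fun k _ => by
          rw [hder k j]; ring
    _ = -(n x i) * (∑ j, ∑ k, P x j k * fderiv ℝ (fun z => n z k) x (Pi.single j 1))
        + ∑ j, (-(fderiv ℝ (fun z => n z i) x (Pi.single j 1)))
            * (∑ k, P x j k * n x k) := by
        simp [Finset.mul_sum, Finset.sum_add_distrib]
    _ = -(κ x * n x i) := by
        simp only [hPn, mul_zero, Finset.sum_const_zero, add_zero, hκ x]
        ring
end

section
/- Combining the Itô–Stratonovich rule with the projection identity: if X solves dX_t = P(X_t) ∘ dB_t where P(x) = E − n(x)n(x)ᵀ is the C¹ tangential projection of a C² hypersurface, then the Itô form reads dX_t = P(X_t) dB_t − (1/2) κ(X_t) n(X_t) dt, where κ = Tr(P∇n). -/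
open Matrix intervalIntegral

/-- Brownian motion on a hypersurface: if `X` solves the Stratonovich SDE
`dX = P(X) ∘ dB` for the `C¹` tangential projection `P(x) = E − n(x)n(x)ᵀ` of a unit
normal field `n` (i.e. `X_t = X_0 + ∫₀ᵗ P(X) dB + ½ C_t`, where `SI` is the Itô integral
and `C` the quadratic-covariation correction `C_t^i = ∫₀ᵗ Σ_{j,k} P_{jk} ∂_j P_{ik}(X_s) ds`),
then the Itô form reads `dX_t = P(X_t) dB_t − ½ κ(X_t) n(X_t) dt`, where `κ = Tr(P ∇n)`. -/
theorem brownian_on_hypersurface_ito_form {d : ℕ} {Ω : Type*}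
    (n : (Fin d → ℝ) → (Fin d → ℝ))
    (hn : ∀ i, ContDiff ℝ 1 (fun y => n y i))
    (hunit : ∀ y, ∑ i, n y i * n y i = 1)
    (P : (Fin d → ℝ) → Matrix (Fin d) (Fin d) ℝ)
    (hP : ∀ y, P y = 1 - Matrix.vecMulVec (n y) (n y))
    (κ : (Fin d → ℝ) → ℝ)
    (hκ : ∀ y, κ y = ∑ i, ∑ j, P y i j * fderiv ℝ (fun z => n z j) y (Pi.single i 1))
    (B X : ℝ → Ω → Fin d → ℝ)      -- driving Brownian motion and solution process
    (SI : ℝ → Ω → Fin d → ℝ)       -- the Itô integral `∫₀ᵗ P(X_s) dB_s`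
    (C : ℝ → Ω → Fin d → ℝ)        -- the Stratonovich correction (quadratic covariation)
    (hC : ∀ t ω i, C t ω i =
      ∫ s in (0:ℝ)..t, ∑ j, ∑ k,
        P (X s ω) j k * fderiv ℝ (fun y => P y i k) (X s ω) (Pi.single j 1))
    (hStrat : ∀ t ω i, X t ω i = X 0 ω i + SI t ω i + (1/2) * C t ω i) :
    ∀ t ω i, X t ω i = X 0 ω i + SI t ω i
      + ∫ s in (0:ℝ)..t, -((1/2) * κ (X s ω) * n (X s ω) i) := by
  have hdiff : ∀ (i : Fin d) (y : Fin d → ℝ),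
      DifferentiableAt ℝ (fun z => n z i) y := fun i y =>
    ((hn i).differentiable one_ne_zero).differentiableAt
  -- derivative of the projection entries
  have hdP : ∀ (y : Fin d → ℝ) (i k : Fin d) (v : Fin d → ℝ),
      fderiv ℝ (fun z => P z i k) y v
        = -(fderiv ℝ (fun z => n z i) y v * n y k
            + n y i * fderiv ℝ (fun z => n z k) y v) := by
    intro y i k v
    have hfun : (fun z => P z i k)
        = fun z => (1 : Matrix (Fin d) (Fin d) ℝ) i k - n z i * n z k := by
      funext z
      rw [hP z]
      simp [Matrix.sub_apply, Matrix.vecMulVec_apply]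
    rw [hfun, fderiv_const_sub, fderiv_fun_mul (hdiff i y) (hdiff k y)]
    simp [smul_eq_mul]
    ring
  -- P annihilates n
  have hPn : ∀ (y : Fin d → ℝ) (j : Fin d), ∑ k, P y j k * n y k = 0 := by
    intro y j
    have : ∑ k, P y j k * n y k
        = ∑ k, ((if j = k then (1:ℝ) else 0) * n y k - n y j * (n y k * n y k)) := by
      apply Finset.sum_congr rfl
      intro k _
      rw [hP y]
      simp only [Matrix.sub_apply, Matrix.one_apply, Matrix.vecMulVec_apply]
      ring
    rw [this, Finset.sum_sub_distrib, ← Finset.mul_sum, hunit]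
    simp [Finset.sum_ite_eq]
  -- the key pointwise identity
  have key : ∀ (y : Fin d → ℝ) (i : Fin d),
      (∑ j, ∑ k, P y j k * fderiv ℝ (fun z => P z i k) y (Pi.single j 1))
        = -(κ y * n y i) := by
    intro y i
    have expand : ∀ j k : Fin d,
        P y j k * fderiv ℝ (fun z => P z i k) y (Pi.single j 1)
          = -(fderiv ℝ (fun z => n z i) y (Pi.single j 1) * (P y j k * n y k))
            - n y i * (P y j k * fderiv ℝ (fun z => n z k) y (Pi.single j 1)) := by
      intro j k
      rw [hdP]
      ring
    calc (∑ j, ∑ k, P y j k * fderiv ℝ (fun z => P z i k) y (Pi.single j 1))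
        = ∑ j, (-(fderiv ℝ (fun z => n z i) y (Pi.single j 1)
              * (∑ k, P y j k * n y k))
            - n y i * ∑ k, P y j k * fderiv ℝ (fun z => n z k) y (Pi.single j 1)) := by
          apply Finset.sum_congr rfl
          intro j _
          rw [Finset.sum_congr rfl (fun k _ => expand j k),
            Finset.sum_sub_distrib, Finset.sum_neg_distrib,
            ← Finset.mul_sum, ← Finset.mul_sum]
      _ = ∑ j, (-(n y i) * ∑ k, P y j k * fderiv ℝ (fun z => n z k) y (Pi.single j 1)) := by
          apply Finset.sum_congr rfl
          intro j _
          rw [hPn y j]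
          ring
      _ = -(n y i) * ∑ j, ∑ k, P y j k * fderiv ℝ (fun z => n z k) y (Pi.single j 1) := by
          rw [Finset.mul_sum]
      _ = -(κ y * n y i) := by rw [← hκ y]; ring
  intro t ω i
  rw [hStrat t ω i, hC]
  congr 1
  have h1 : (∫ s in (0:ℝ)..t, ∑ j, ∑ k,
      P (X s ω) j k * fderiv ℝ (fun y => P y i k) (X s ω) (Pi.single j 1))
      = ∫ s in (0:ℝ)..t, -(κ (X s ω) * n (X s ω) i) := by
    apply intervalIntegral.integral_congr
    intro s _
    exact key (X s ω) i
  rw [h1, ← intervalIntegral.integral_const_mul]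
  apply intervalIntegral.integral_congr
  intro s _
  simp
  ring
end
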